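/- arXiv:2209.03510 — 5 statements merged into one kernel-verified Lean document; each statement's English description precedes it below -/
import Mathlib

section
/- Let D be a bounded domain in ℂⁿ and p > 0. If the p-Bergman kernel B_{D,p} is exhaustive (i.e., for every c ∈ ℝ the sublevel set {z ∈ D : B_{D,p}(z) ≤ c} is compact), then D is A^p-complete. -/
open MeasureTheory

noncomputable def apNorm (n : ℕ) (p : ℝ) (D : Set (Fin n → ℂ))
    (φ : (Fin n → ℂ) → ℂ) : ℝ :=
  (∫ z in D, ‖φ z‖ ^ p) ^ (1 / p)

def MemAp (n : ℕ) (p : ℝ) (D : Set (Fin n → ℂ)) (φ : (Fin n → ℂ) → ℂ) : Prop :=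
  DifferentiableOn ℂ φ D ∧ IntegrableOn (fun z => ‖φ z‖ ^ p) D volume

/-- The restriction map `A^p(D̃) → A^p(D)` (for `D ⊆ D̃`) is a linear isometry:
it is norm preserving and surjective. -/
def RestrictionIsometry (n : ℕ) (p : ℝ) (D D' : Set (Fin n → ℂ)) : Prop :=
  (∀ ψ : (Fin n → ℂ) → ℂ, MemAp n p D' ψ →
      MemAp n p D ψ ∧ apNorm n p D ψ = apNorm n p D' ψ) ∧
  (∀ φ : (Fin n → ℂ) → ℂ, MemAp n p D φ →
      ∃ ψ : (Fin n → ℂ) → ℂ, MemAp n p D' ψ ∧ ∀ z ∈ D, ψ z = φ z)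

/-- `D` is `A^p`-complete: there is no strictly larger domain `D̃ ⊋ D` such that the
restriction map `A^p(D̃) → A^p(D)` is a linear isometry. -/
def ApComplete (n : ℕ) (p : ℝ) (D : Set (Fin n → ℂ)) : Prop :=
  ¬ ∃ D' : Set (Fin n → ℂ), IsOpen D' ∧ IsConnected D' ∧ D ⊆ D' ∧ D ≠ D' ∧
      RestrictionIsometry n p D D'

/-- The `p`-Bergman kernel. -/
noncomputable def pBergman (n : ℕ) (p : ℝ) (D : Set (Fin n → ℂ))
    (z : Fin n → ℂ) : ℝ :=
  sSup {x : ℝ | ∃ φ : (Fin n → ℂ) → ℂ, MemAp n p D φ ∧ (∃ w ∈ D, φ w ≠ 0) ∧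
    x = ‖φ z‖ ^ 2 / (apNorm n p D φ) ^ 2}

open Metric

lemma circle_submean (f : ℂ → ℂ) (U : Set ℂ) (hf : DifferentiableOn ℂ f U)
    (c : ℂ) {r : ℝ} (hr : 0 < r) (hsub : closedBall c r ⊆ U) :
    2 * Real.pi * ‖f c‖ ≤ ∫ θ in (0)..(2 * Real.pi), ‖f (circleMap c r θ)‖ := by
  have hd : DiffContOnCl ℂ f (ball c r) := by
    apply DifferentiableOn.diffContOnCl
    rw [closure_ball c hr.ne']
    exact hf.mono hsub
  have hC := hd.circleIntegral_sub_inv_smul (mem_ball_self hr)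
  have h1 : ‖(2 * (Real.pi:ℂ) * Complex.I) • f c‖ = 2 * Real.pi * ‖f c‖ := by
    simp [norm_smul, Complex.norm_real, abs_of_pos Real.pi_pos, mul_comm]
  calc 2 * Real.pi * ‖f c‖ = ‖(∮ z in C(c, r), (z - c)⁻¹ • f z)‖ := by rw [hC, h1]
    _ ≤ ∫ θ in (0)..(2 * Real.pi), ‖deriv (circleMap c r) θ • (circleMap c r θ - c)⁻¹ • f (circleMap c r θ)‖ := by
        apply intervalIntegral.norm_integral_le_integral_norm
        positivity
    _ = ∫ θ in (0)..(2 * Real.pi), ‖f (circleMap c r θ)‖ := by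
        apply intervalIntegral.integral_congr
        intro θ _
        show ‖deriv (circleMap c r) θ • (circleMap c r θ - c)⁻¹ • f (circleMap c r θ)‖ = _
        rw [deriv_circleMap, circleMap_sub_center, smul_eq_mul, smul_eq_mul, norm_mul, norm_mul,
          norm_mul, norm_inv,
          norm_circleMap_zero, abs_of_pos hr]
        simp
        field_simp

lemma disc_submean (f : ℂ → ℂ) (U : Set ℂ) (hU : IsOpen U) (hf : DifferentiableOn ℂ f U)
    (c : ℂ) {t : ℝ} (ht : 0 < t) (hsub : closedBall c t ⊆ U) :
    Real.pi * t ^ 2 * ‖f c‖ ≤ ∫ w in ball c t, ‖f w‖ := by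
  have hcont : ContinuousOn f U := hf.continuousOn
  set S : Set (ℝ × ℝ) := Set.Ioo (0:ℝ) t ×ˢ Set.Ioo (-Real.pi) Real.pi with hS
  set F : ℝ × ℝ → ℝ := fun p => p.1 * ‖f (c + p.1 * (Real.cos p.2 + Real.sin p.2 * Complex.I))‖ with hF
  have habs : ∀ θ : ℝ, ‖(Real.cos θ : ℂ) + (Real.sin θ : ℂ) * Complex.I‖ = 1 := by
    intro θ
    rw [Complex.norm_add_mul_I, Real.sqrt_eq_one]
    nlinarith [Real.cos_sq_add_sin_sq θ]
  -- step 2: translation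
  have step2 : ∫ w in ball c t, ‖f w‖
      = ∫ v, Set.indicator (ball (0:ℂ) t) (fun v => ‖f (c + v)‖) v := by
    rw [← integral_indicator measurableSet_ball]
    rw [← integral_add_left_eq_self (fun w => Set.indicator (ball c t) (fun w => ‖f w‖) w) c]
    congr 1
    funext v
    by_cases h : v ∈ ball (0:ℂ) t
    · rw [Set.indicator_of_mem h, Set.indicator_of_mem]
      simpa [mem_ball, dist_eq_norm] using h
    · rw [Set.indicator_of_notMem h, Set.indicator_of_notMem]
      intro hmem
      exact h (by simpa [mem_ball, dist_eq_norm] using hmem)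
  -- step 3+4: polar coordinates
  have step34 : ∫ v, Set.indicator (ball (0:ℂ) t) (fun v => ‖f (c + v)‖) v
      = ∫ p in S, F p := by
    rw [← Complex.integral_comp_polarCoord_symm]
    have hmt : MeasurableSet polarCoord.target := polarCoord.open_target.measurableSet
    have hpt : ∀ p ∈ polarCoord.target,
        p.1 • Set.indicator (ball (0:ℂ) t) (fun v => ‖f (c + v)‖) (Complex.polarCoord.symm p)
        = Set.indicator S F p := by
      intro p hp
      rw [polarCoord_target] at hp
      obtain ⟨hp1, hp2⟩ := hp
      have hp1' : (0:ℝ) < p.1 := hp1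
      have habs' : ‖Complex.polarCoord.symm p‖ = p.1 := by
        rw [Complex.norm_polarCoord_symm, abs_of_pos hp1']
      have hmemiff : Complex.polarCoord.symm p ∈ ball (0:ℂ) t ↔ p.1 < t := by
        rw [mem_ball, dist_zero_right, habs']
      by_cases h : p.1 < t
      · have hmem : Complex.polarCoord.symm p ∈ ball (0:ℂ) t := hmemiff.mpr h
        have hmemS : p ∈ S := ⟨⟨hp1', h⟩, hp2⟩
        rw [Set.indicator_of_mem hmem, Set.indicator_of_mem hmemS, smul_eq_mul, hF]
        simp [Complex.polarCoord_symm_apply]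
      · have hmem : Complex.polarCoord.symm p ∉ ball (0:ℂ) t := fun hc => h (hmemiff.mp hc)
        have hmemS : p ∉ S := fun hc => h hc.1.2
        rw [Set.indicator_of_notMem hmem, Set.indicator_of_notMem hmemS, smul_zero]
    rw [setIntegral_congr_fun hmt hpt,
      setIntegral_indicator (MeasurableSet.prod measurableSet_Ioo measurableSet_Ioo),
      Set.inter_eq_self_of_subset_right
        (by rw [polarCoord_target]; exact Set.prod_mono Set.Ioo_subset_Ioi_self (le_refl _))]
  -- continuity of the polar integrand on the compact rectangle
  set K : Set (ℝ × ℝ) := Set.Icc (0:ℝ) t ×ˢ Set.Icc (-Real.pi) Real.pi with hK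
  have hgcont : Continuous fun p : ℝ × ℝ => c + (p.1:ℂ) * (Real.cos p.2 + Real.sin p.2 * Complex.I) := by
    fun_prop
  have hmapsTo : Set.MapsTo (fun p : ℝ × ℝ => c + (p.1:ℂ) * (Real.cos p.2 + Real.sin p.2 * Complex.I)) K U := by
    intro p hp
    apply hsub
    have he : c + (p.1:ℂ) * (Real.cos p.2 + Real.sin p.2 * Complex.I) - c
        = (p.1:ℂ) * (Real.cos p.2 + Real.sin p.2 * Complex.I) := by ring
    simp only [mem_closedBall]
    rw [Complex.dist_eq, he, norm_mul, habs, mul_one, Complex.norm_real, Real.norm_eq_abs, abs_of_nonneg hp.1.1]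
    exact hp.1.2
  have hFcont : ContinuousOn F K :=
    ContinuousOn.mul (continuous_fst.continuousOn)
      ((hcont.comp hgcont.continuousOn hmapsTo).norm)
  have hFint : IntegrableOn F S := by
    apply (hFcont.integrableOn_compact (isCompact_Icc.prod isCompact_Icc)).mono_set
    exact Set.prod_mono Set.Ioo_subset_Icc_self Set.Ioo_subset_Icc_self
  have hFint' : IntegrableOn F S ((volume : Measure ℝ).prod volume) := by
    rwa [← MeasureTheory.Measure.volume_eq_prod]
  have hiter : ∫ p in S, F p
      = ∫ r in Set.Ioo (0:ℝ) t, ∫ θ in Set.Ioo (-Real.pi) Real.pi, F (r, θ) := by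
    rw [MeasureTheory.Measure.volume_eq_prod, hS, setIntegral_prod F hFint']
  -- inner bound
  have hinner : ∀ r ∈ Set.Ioo (0:ℝ) t,
      2 * Real.pi * ‖f c‖ * r ≤ ∫ θ in Set.Ioo (-Real.pi) Real.pi, F (r, θ) := by
    intro r hr
    have h1 : ∫ θ in Set.Ioo (-Real.pi) Real.pi, F (r, θ)
        = r * ∫ θ in Set.Ioo (-Real.pi) Real.pi, ‖f (circleMap c r θ)‖ := by
      rw [← integral_const_mul]
      apply setIntegral_congr_fun measurableSet_Ioo
      intro θ _
      rw [hF]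
      simp only [circleMap, Complex.exp_mul_I, Complex.ofReal_cos, Complex.ofReal_sin]
    have hper : Function.Periodic (fun θ => ‖f (circleMap c r θ)‖) (2 * Real.pi) :=
      (periodic_circleMap c r).comp (fun z => ‖f z‖)
    have h2 : ∫ θ in Set.Ioo (-Real.pi) Real.pi, ‖f (circleMap c r θ)‖
        = ∫ θ in (0)..(2*Real.pi), ‖f (circleMap c r θ)‖ := by
      rw [← integral_Ioc_eq_integral_Ioo,
        ← intervalIntegral.integral_of_le (by linarith [Real.pi_pos])]
      have hh := hper.intervalIntegral_add_eq (-Real.pi) 0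
      rw [show -Real.pi + 2*Real.pi = Real.pi by ring, zero_add] at hh
      exact hh
    have h3 := circle_submean f U hf c hr.1 ((closedBall_subset_closedBall hr.2.le).trans hsub)
    rw [h1, h2]
    calc 2 * Real.pi * ‖f c‖ * r = r * (2 * Real.pi * ‖f c‖) := by ring
      _ ≤ r * ∫ θ in (0)..(2*Real.pi), ‖f (circleMap c r θ)‖ :=
          mul_le_mul_of_nonneg_left h3 hr.1.le
  -- outer estimate
  have hlow : IntegrableOn (fun r => 2 * Real.pi * ‖f c‖ * r) (Set.Ioo (0:ℝ) t) := by
    apply ((continuous_const.mul continuous_id).continuousOn.integrableOn_compact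
      isCompact_Icc).mono_set Set.Ioo_subset_Icc_self
  have hup : IntegrableOn (fun r => ∫ θ in Set.Ioo (-Real.pi) Real.pi, F (r, θ)) (Set.Ioo (0:ℝ) t) := by
    have h2 : Integrable F (((volume : Measure ℝ).restrict (Set.Ioo (0:ℝ) t)).prod
        ((volume : Measure ℝ).restrict (Set.Ioo (-Real.pi) Real.pi))) := by
      rw [MeasureTheory.Measure.prod_restrict]
      exact hFint'
    exact h2.integral_prod_left
  have houter := setIntegral_mono_on hlow hup measurableSet_Ioo hinner
  have hid : ∫ r in Set.Ioo (0:ℝ) t, 2 * Real.pi * ‖f c‖ * r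
      = 2 * Real.pi * ‖f c‖ * (t^2/2) := by
    have hr : ∫ r in Set.Ioo (0:ℝ) t, r = t^2/2 := by
      rw [← integral_Ioc_eq_integral_Ioo, ← intervalIntegral.integral_of_le ht.le, integral_id]
      ring
    rw [integral_const_mul, hr]
  rw [step2, step34, hiter]
  rw [hid] at houter
  nlinarith [houter]

lemma polydisc_submean : ∀ (n : ℕ) (f : (Fin n → ℂ) → ℂ) (U : Set (Fin n → ℂ)), IsOpen U →
    DifferentiableOn ℂ f U → ∀ (z : Fin n → ℂ) (t : ℝ), 0 < t → closedBall z t ⊆ U →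
    Real.pi ^ n * t ^ (2*n) * ‖f z‖ ≤ ∫ w in ball z t, ‖f w‖ := by
  intro n
  induction n with
  | zero =>
    intro f U hU hf z t ht hsub
    have hball : ball z t = Set.univ := by
      ext w
      simp only [Set.mem_univ, iff_true, mem_ball]
      rw [Subsingleton.elim w z]
      simpa using ht
    have hfz : (fun w : Fin 0 → ℂ => ‖f w‖) = fun _ => ‖f z‖ := by
      funext w; rw [Subsingleton.elim w z]
    have hvol : (volume : Measure (Fin 0 → ℂ)) Set.univ = 1 := by
      rw [MeasureTheory.volume_pi, MeasureTheory.Measure.pi_univ]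
      simp
    rw [hball, MeasureTheory.setIntegral_univ, hfz, integral_const, measureReal_def, hvol]
    simp
  | succ n ih =>
    intro f U hU hf z t ht hsub
    set e := MeasurableEquiv.piFinSuccAbove (fun _ : Fin (n+1) => ℂ) 0 with he
    set Z : Fin n → ℂ := Fin.removeNth 0 z with hZ
    set B1 := ball (z 0) t with hB1
    set B2 := ball Z t with hB2
    set G : ℂ × (Fin n → ℂ) → ℂ := fun q => f (Fin.insertNth 0 q.1 q.2) with hG
    have hsymm : ∀ q : ℂ × (Fin n → ℂ), e.symm q = Fin.insertNth 0 q.1 q.2 := fun q => rfl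
    have happ : ∀ w : Fin (n+1) → ℂ, e w = (w 0, Fin.removeNth 0 w) := fun w => rfl
    -- differentiability of insertNth as a map
    have hLd : Differentiable ℂ (fun q : ℂ × (Fin n → ℂ) => (Fin.insertNth 0 q.1 q.2 : Fin (n+1) → ℂ)) := by
      refine differentiable_pi.mpr fun j => ?_
      refine Fin.succAboveCases 0 ?_ ?_ j
      · simp only [Fin.insertNth_apply_same]
        exact differentiable_fst
      · intro k
        simp only [Fin.insertNth_apply_succAbove]
        exact differentiable_pi.mp differentiable_snd k
    have hLc : Continuous (fun q : ℂ × (Fin n → ℂ) => (Fin.insertNth 0 q.1 q.2 : Fin (n+1) → ℂ)) :=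
      hLd.continuous
    -- ball decomposition
    have hball_eq : ball z t = e ⁻¹' (B1 ×ˢ B2) := by
      ext w
      rw [Set.mem_preimage, happ, Set.mem_prod, hB1, hB2, mem_ball, mem_ball, mem_ball,
        dist_pi_lt_iff ht, dist_pi_lt_iff ht, Fin.forall_iff_succAbove (0 : Fin (n+1))]
      rfl
    -- membership of insertNth in closed balls
    have hins_cb : ∀ a ∈ closedBall (z 0) t, ∀ b ∈ closedBall Z t,
        (Fin.insertNth 0 a b : Fin (n+1) → ℂ) ∈ closedBall z t := by
      intro a ha b hb
      rw [mem_closedBall, dist_pi_le_iff ht.le]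
      refine Fin.succAboveCases 0 ?_ ?_
      · rw [Fin.insertNth_apply_same]
        exact mem_closedBall.mp ha
      · intro k
        rw [Fin.insertNth_apply_succAbove]
        exact le_trans (dist_le_pi_dist b Z k) (mem_closedBall.mp hb)
    have hPres := MeasureTheory.volume_preserving_piFinSuccAbove (fun _ : Fin (n+1) => ℂ) 0
    have htrans : ∫ w in ball z t, ‖f w‖ = ∫ q in B1 ×ˢ B2, ‖G q‖ := by
      rw [← hPres.setIntegral_preimage_emb e.measurableEmbedding (fun q => ‖G q‖) (B1 ×ˢ B2),
        ← hball_eq]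
      apply setIntegral_congr_fun measurableSet_ball
      intro w _
      show ‖f w‖ = ‖G (e w)‖
      rw [hG]
      simp only [happ]
      rw [Fin.insertNth_self_removeNth]
    have hGcont : ContinuousOn (fun q => ‖G q‖) (closedBall (z 0) t ×ˢ closedBall Z t) := by
      apply ContinuousOn.norm
      rw [hG]
      apply hf.continuousOn.comp (hLc.continuousOn)
      intro q hq
      exact hsub (hins_cb q.1 hq.1 q.2 hq.2)
    have hGint : IntegrableOn (fun q => ‖G q‖) (B1 ×ˢ B2) ((volume : Measure ℂ).prod volume) := by
      have h1 : IntegrableOn (fun q => ‖G q‖) (closedBall (z 0) t ×ˢ closedBall Z t) :=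
        hGcont.integrableOn_compact ((isCompact_closedBall _ _).prod (isCompact_closedBall _ _))
      rw [MeasureTheory.Measure.volume_eq_prod] at h1
      exact h1.mono_set (Set.prod_mono ball_subset_closedBall ball_subset_closedBall)
    have hiter : ∫ q in B1 ×ˢ B2, ‖G q‖ = ∫ a in B1, ∫ b in B2, ‖G (a, b)‖ := by
      rw [MeasureTheory.Measure.volume_eq_prod]
      exact setIntegral_prod _ hGint
    have hinner : ∀ a ∈ B1, Real.pi ^ n * t ^ (2*n) * ‖G (a, Z)‖ ≤ ∫ b in B2, ‖G (a, b)‖ := by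
      intro a ha
      have hacb : a ∈ closedBall (z 0) t := ball_subset_closedBall ha
      have hda : Differentiable ℂ (fun b : Fin n → ℂ => (Fin.insertNth 0 a b : Fin (n+1) → ℂ)) := by
        have hh : (fun b : Fin n → ℂ => (Fin.insertNth 0 a b : Fin (n+1) → ℂ))
            = (fun q : ℂ × (Fin n → ℂ) => (Fin.insertNth 0 q.1 q.2 : Fin (n+1) → ℂ))
              ∘ (fun b => (a, b)) := rfl
        rw [hh]
        exact hLd.comp ((differentiable_const a).prodMk differentiable_id)
      refine ih (fun b => G (a, b))
        ((fun b : Fin n → ℂ => (Fin.insertNth 0 a b : Fin (n+1) → ℂ)) ⁻¹' U)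
        (hU.preimage hda.continuous) ?_ Z t ht ?_
      · exact hf.comp hda.differentiableOn (fun b hb => hb)
      · intro b hb
        exact hsub (hins_cb a hacb b hb)
    have hupint : IntegrableOn (fun a => ∫ b in B2, ‖G (a, b)‖) B1 := by
      have h2 : Integrable (fun q => ‖G q‖)
          (((volume : Measure ℂ).restrict B1).prod
            ((volume : Measure (Fin n → ℂ)).restrict B2)) := by
        rw [MeasureTheory.Measure.prod_restrict]
        exact hGint
      exact h2.integral_prod_left
    have hlowint : IntegrableOn (fun a => Real.pi ^ n * t ^ (2*n) * ‖G (a, Z)‖) B1 := by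
      have hc : ContinuousOn (fun a => ‖G (a, Z)‖) (closedBall (z 0) t) := by
        have hmt : Set.MapsTo (fun a : ℂ => (a, Z)) (closedBall (z 0) t)
            (closedBall (z 0) t ×ˢ closedBall Z t) :=
          fun a ha => ⟨ha, mem_closedBall_self ht.le⟩
        exact hGcont.comp (Continuous.continuousOn (by fun_prop)) hmt
      exact ((hc.integrableOn_compact (isCompact_closedBall _ _)).mono_set
        ball_subset_closedBall).const_mul _
    have houter := setIntegral_mono_on hlowint hupint measurableSet_ball hinner
    have hda2 : Differentiable ℂ (fun a : ℂ => (Fin.insertNth 0 a Z : Fin (n+1) → ℂ)) :=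
      hLd.comp (differentiable_id.prodMk (differentiable_const Z))
    have h1d : Real.pi * t ^ 2 * ‖G (z 0, Z)‖ ≤ ∫ a in B1, ‖G (a, Z)‖ := by
      refine disc_submean (fun a => G (a, Z))
        ((fun a : ℂ => (Fin.insertNth 0 a Z : Fin (n+1) → ℂ)) ⁻¹' U)
        (hU.preimage hda2.continuous)
        (hf.comp hda2.differentiableOn (fun a ha => ha)) (z 0) ht ?_
      intro a ha
      exact hsub (hins_cb a ha Z (mem_closedBall_self ht.le))
    have hfzG : G (z 0, Z) = f z := by
      rw [hG]
      simp only
      rw [hZ, Fin.insertNth_self_removeNth]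
    have hmono2 : Real.pi ^ n * t^(2*n) * (Real.pi * t^2 * ‖f z‖)
        ≤ ∫ a in B1, Real.pi ^ n * t^(2*n) * ‖G (a, Z)‖ := by
      rw [integral_const_mul]
      apply mul_le_mul_of_nonneg_left _ (by positivity)
      rw [← hfzG]
      exact h1d
    rw [htrans, hiter]
    calc Real.pi ^ (n+1) * t ^ (2*(n+1)) * ‖f z‖
        = Real.pi ^ n * t^(2*n) * (Real.pi * t^2 * ‖f z‖) := by ring
      _ ≤ ∫ a in B1, Real.pi ^ n * t^(2*n) * ‖G (a, Z)‖ := hmono2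
      _ ≤ ∫ a in B1, ∫ b in B2, ‖G (a, b)‖ := houter

lemma key_bound (n : ℕ) (p : ℝ) (hp : 0 < p) (hn : 0 < n) (D' : Set (Fin n → ℂ))
    (hD' : IsOpen D') (z₀ : Fin n → ℂ) (δ : ℝ) (hδ : 0 < δ)
    (hsub : closedBall z₀ (2*δ) ⊆ D') :
    ∃ C : ℝ, 0 ≤ C ∧ ∀ ψ : (Fin n → ℂ) → ℂ, DifferentiableOn ℂ ψ D' →
      IntegrableOn (fun w => ‖ψ w‖ ^ p) D' volume →
      (∫ w in D', ‖ψ w‖ ^ p) ≤ 1 →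
      ∀ z ∈ closedBall z₀ δ, ‖ψ z‖ ≤ C := by
  have hπδ : (0:ℝ) < Real.pi ^ n * δ ^ (2*n) := by positivity
  have hIntLe : ∀ ψ : (Fin n → ℂ) → ℂ, IntegrableOn (fun w => ‖ψ w‖ ^ p) D' volume →
      ∀ s : Set (Fin n → ℂ), s ⊆ D' → (∫ w in s, ‖ψ w‖ ^ p) ≤ ∫ w in D', ‖ψ w‖ ^ p := by
    intro ψ hint s hs
    apply setIntegral_mono_set hint
    · exact Filter.Eventually.of_forall fun w => Real.rpow_nonneg (norm_nonneg _) p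
    · exact Filter.Eventually.of_forall hs |>.mono fun w hw => hw  -- s ≤ᵐ t
  by_cases hple : p ≤ 1
  · -- case p ≤ 1 : weighted maximum absorption
    set q : ℝ := 2 * n / p with hq'
    have hq : 0 < q := by positivity
    refine ⟨((2:ℝ)^q / Real.pi^n) ^ (1/p) / δ^q, by positivity, ?_⟩
    intro ψ hdiff hint hI z hz
    set K := closedBall z₀ (2*δ) with hK
    have hKc : IsCompact K := isCompact_closedBall _ _
    have hKne : K.Nonempty := ⟨z₀, mem_closedBall_self (by linarith)⟩
    set ρ : (Fin n → ℂ) → ℝ := fun w => 2*δ - dist w z₀ with hρ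
    have hρcont : Continuous ρ := by fun_prop
    have hρq : Continuous fun w => ρ w ^ q := by
      rw [continuous_iff_continuousAt]
      intro w
      exact (Real.continuousAt_rpow_const (ρ w) q (Or.inr hq.le)).comp hρcont.continuousAt
    set h : (Fin n → ℂ) → ℝ := fun w => ρ w ^ q * ‖ψ w‖ with hh
    have hhcont : ContinuousOn h K :=
      (hρq.continuousOn).mul ((hdiff.continuousOn.mono hsub).norm)
    obtain ⟨z₁, hz₁K, hmax⟩ := hKc.exists_isMaxOn hKne hhcont
    set M := h z₁ with hM
    have hzK : z ∈ K := closedBall_subset_closedBall (by linarith) hz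
    have hρz : δ ≤ ρ z := by
      have h1 := mem_closedBall.mp hz
      have h6 : ρ z = 2*δ - dist z z₀ := rfl
      linarith
    have hρnonnegK : ∀ w ∈ K, 0 ≤ ρ w := by
      intro w hw
      have h1 := mem_closedBall.mp hw
      have h6 : ρ w = 2*δ - dist w z₀ := rfl
      linarith
    have hδq : (0:ℝ) < δ ^ q := Real.rpow_pos_of_pos hδ q
    have hzbound : ‖ψ z‖ * δ^q ≤ M := by
      calc ‖ψ z‖ * δ^q ≤ ‖ψ z‖ * ρ z ^ q := by
            apply mul_le_mul_of_nonneg_left _ (norm_nonneg _)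
            exact Real.rpow_le_rpow hδ.le hρz hq.le
        _ = h z := by show _ = ρ z ^ q * ‖ψ z‖; ring
        _ ≤ M := hmax hzK
    by_cases hMpos : M ≤ 0
    · have : ‖ψ z‖ * δ^q ≤ 0 := le_trans hzbound hMpos
      have : ‖ψ z‖ ≤ 0 := by nlinarith [norm_nonneg (ψ z), hδq]
      calc ‖ψ z‖ ≤ 0 := this
        _ ≤ _ := by positivity
    push_neg at hMpos
    -- z₁ facts
    have hρz₁pos : 0 < ρ z₁ := by
      rcases lt_or_ge 0 (ρ z₁) with h | h
      · exact h
      · exfalso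
        have h0 : ρ z₁ = 0 := le_antisymm h (hρnonnegK z₁ hz₁K)
        have hM2 : M = ρ z₁ ^ q * ‖ψ z₁‖ := rfl
        rw [hM2, h0, Real.zero_rpow hq.ne', zero_mul] at hMpos
        exact lt_irrefl _ hMpos
    have hρz₁q : (0:ℝ) < ρ z₁ ^ q := Real.rpow_pos_of_pos hρz₁pos q
    have hA : (0:ℝ) < ‖ψ z₁‖ := by
      rcases lt_or_ge 0 ‖ψ z₁‖ with h | h
      · exact h
      · exfalso
        have h0 : ‖ψ z₁‖ = 0 := le_antisymm h (norm_nonneg _)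
        have hM2 : M = ρ z₁ ^ q * ‖ψ z₁‖ := rfl
        rw [hM2, h0, mul_zero] at hMpos
        exact lt_irrefl _ hMpos
    set t : ℝ := ρ z₁ / 2 with ht'
    have ht : 0 < t := by positivity
    have hd1 : dist z₁ z₀ ≤ 2*δ := mem_closedBall.mp hz₁K
    have htcb : closedBall z₁ t ⊆ K := by
      intro w hw
      have hw' := mem_closedBall.mp hw
      rw [hK, mem_closedBall]
      have h3 : dist w z₀ ≤ dist w z₁ + dist z₁ z₀ := dist_triangle _ _ _
      have h5 : t = (2*δ - dist z₁ z₀)/2 := rfl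
      linarith
    have htD' : closedBall z₁ t ⊆ D' := htcb.trans hsub
    -- pointwise bound on the small ball
    set u : ℝ := t ^ q with hu'
    have hu : (0:ℝ) < u := Real.rpow_pos_of_pos ht q
    set B : ℝ := (2:ℝ)^q * ‖ψ z₁‖ with hB'
    have h2q : (0:ℝ) < (2:ℝ)^q := Real.rpow_pos_of_pos two_pos q
    have hB : 0 < B := by positivity
    have hMuB : M = u * B := by
      have hρ2 : ρ z₁ = 2 * t := by rw [ht']; ring
      have hM2 : M = ρ z₁ ^ q * ‖ψ z₁‖ := rfl
      rw [hM2, hρ2, Real.mul_rpow (by norm_num) ht.le, hu', hB']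
      ring
    have hpsi_le_B : ∀ w ∈ ball z₁ t, ‖ψ w‖ ≤ B := by
      intro w hw
      have hwK : w ∈ K := htcb (ball_subset_closedBall hw)
      have hρw : t ≤ ρ w := by
        have h3 : dist w z₀ ≤ dist w z₁ + dist z₁ z₀ := dist_triangle _ _ _
        have h4 : dist w z₁ ≤ t := (mem_ball.mp hw).le
        have h5 : t = (2*δ - dist z₁ z₀)/2 := rfl
        have h6 : ρ w = 2*δ - dist w z₀ := rfl
        linarith
      have h5 : ‖ψ w‖ * u ≤ ‖ψ w‖ * ρ w ^ q := by
        apply mul_le_mul_of_nonneg_left _ (norm_nonneg _)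
        rw [hu']
        exact Real.rpow_le_rpow ht.le hρw hq.le
      have h6 : ‖ψ w‖ * ρ w ^ q ≤ M := by
        calc ‖ψ w‖ * ρ w ^ q = h w := by show _ = ρ w ^ q * ‖ψ w‖; ring
          _ ≤ M := hmax hwK
      have h7 : ‖ψ w‖ * u ≤ u * B := by rw [← hMuB]; linarith
      nlinarith
    have hpoint : ∀ w ∈ ball z₁ t, ‖ψ w‖ ≤ ‖ψ w‖ ^ p * B ^ (1-p) := by
      intro w hw
      have hb := hpsi_le_B w hw
      have ha : (0:ℝ) ≤ ‖ψ w‖ := norm_nonneg _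
      have : ‖ψ w‖ = ‖ψ w‖ ^ p * ‖ψ w‖ ^ (1-p) := by
        rw [← Real.rpow_add' ha (by norm_num)]
        norm_num
      calc ‖ψ w‖ = ‖ψ w‖ ^ p * ‖ψ w‖ ^ (1-p) := this
        _ ≤ ‖ψ w‖ ^ p * B ^ (1-p) :=
            mul_le_mul_of_nonneg_left (Real.rpow_le_rpow ha hb (by linarith))
              (Real.rpow_nonneg ha p)
    -- integrate
    have hcont_ball : IntegrableOn (fun w => ‖ψ w‖) (ball z₁ t) := by
      apply (((hdiff.continuousOn.mono htD').norm).integrableOn_compact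
        (isCompact_closedBall _ _)).mono_set ball_subset_closedBall
    have hint_ball : IntegrableOn (fun w => ‖ψ w‖ ^ p * B ^ (1-p)) (ball z₁ t) := by
      exact ((hint.mono_set (ball_subset_closedBall.trans htD'))).mul_const _
    have hpd := polydisc_submean n ψ D' hD' hdiff z₁ t ht htD'
    have hstep : ∫ w in ball z₁ t, ‖ψ w‖ ≤ B ^ (1-p) := by
      calc ∫ w in ball z₁ t, ‖ψ w‖ ≤ ∫ w in ball z₁ t, ‖ψ w‖ ^ p * B ^ (1-p) :=
            setIntegral_mono_on hcont_ball hint_ball measurableSet_ball hpoint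
        _ = (∫ w in ball z₁ t, ‖ψ w‖ ^ p) * B ^ (1-p) := by rw [integral_mul_const]
        _ ≤ 1 * B ^ (1-p) := by
            apply mul_le_mul_of_nonneg_right _ (Real.rpow_nonneg hB.le _)
            exact le_trans (hIntLe ψ hint _ (ball_subset_closedBall.trans htD')) hI
        _ = B ^ (1-p) := one_mul _
    have hstar : Real.pi ^ n * t ^ (2*n) * ‖ψ z₁‖ ≤ B ^ (1-p) := le_trans hpd hstep
    -- algebra: M ^ p ≤ 2^q / π^n
    have hupow : (u : ℝ) ^ p = t ^ (2*n : ℕ) := by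
      have hqp : q * p = ((2*n : ℕ) : ℝ) := by
        rw [hq', div_mul_cancel₀ _ hp.ne']
        push_cast
        ring
      rw [hu', ← Real.rpow_natCast t (2*n), ← Real.rpow_mul ht.le, hqp]
    have hBsplit : B ^ (1-p) = B * B ^ (-p) := by
      rw [show (1:ℝ)-p = 1 + (-p) by ring, Real.rpow_add hB, Real.rpow_one]
    have hvy : B ^ p * B ^ (-p) = 1 := by
      rw [← Real.rpow_add hB]
      simp
    have hπn : (0:ℝ) < Real.pi ^ n := by positivity
    have hBp : (0:ℝ) < B ^ p := Real.rpow_pos_of_pos hB p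
    have hBnp : (0:ℝ) < B ^ (-p) := Real.rpow_pos_of_pos hB (-p)
    have hup : (0:ℝ) < u ^ p := Real.rpow_pos_of_pos hu p
    have hstar2 : Real.pi ^ n * u ^ p * ‖ψ z₁‖ ≤ B * B ^ (-p) := by
      rw [hupow, ← hBsplit]
      exact hstar
    have hMp : M ^ p ≤ 2^q / Real.pi^n := by
      have hMup : M ^ p = u ^ p * B ^ p := by
        rw [hMuB, Real.mul_rpow hu.le hB.le]
      rw [hMup]
      have h8 : Real.pi ^ n * u ^ p * B ≤ 2^q * (B * B ^ (-p)) := by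
        have h9 : Real.pi ^ n * u ^ p * B = 2^q * (Real.pi ^ n * u ^ p * ‖ψ z₁‖) := by
          rw [hB']; ring
        rw [h9]
        exact mul_le_mul_of_nonneg_left hstar2 h2q.le
      -- cancel B, divide by π^n, multiply by B^p
      have h10 : u ^ p ≤ 2^q * B ^ (-p) / Real.pi ^ n := by
        rw [le_div_iff₀ hπn]
        nlinarith
      calc u ^ p * B ^ p ≤ (2^q * B ^ (-p) / Real.pi ^ n) * B ^ p :=
            mul_le_mul_of_nonneg_right h10 hBp.le
        _ = (2^q / Real.pi ^ n) * (B ^ p * B ^ (-p)) := by ring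
        _ = 2^q / Real.pi^n := by rw [hvy, mul_one]
    have hMle : M ≤ ((2:ℝ)^q / Real.pi^n) ^ (1/p) := by
      have hM1 : M = (M ^ p) ^ (1/p) := by
        rw [← Real.rpow_mul hMpos.le, mul_one_div, div_self hp.ne', Real.rpow_one]
      rw [hM1]
      exact Real.rpow_le_rpow (Real.rpow_nonneg hMpos.le p) hMp (by positivity)
    rw [div_eq_mul_inv, ← div_eq_mul_inv]
    rw [le_div_iff₀ hδq]
    exact le_trans hzbound hMle
  · -- case p > 1
    push_neg at hple
    set V₀ : ℝ := (volume (closedBall z₀ (2*δ))).toReal with hV₀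
    have hV₀nonneg : 0 ≤ V₀ := ENNReal.toReal_nonneg
    refine ⟨(V₀ + 1) / (Real.pi^n * δ^(2*n)), by positivity, ?_⟩
    intro ψ hdiff hint hI z hz
    have hball_sub : closedBall z δ ⊆ closedBall z₀ (2*δ) := by
      intro w hw
      rw [mem_closedBall]
      calc dist w z₀ ≤ dist w z + dist z z₀ := dist_triangle _ _ _
        _ ≤ δ + δ := add_le_add (mem_closedBall.mp hw) (mem_closedBall.mp hz)
        _ = 2*δ := by ring
    have hballD' : closedBall z δ ⊆ D' := hball_sub.trans hsub
    have hpd := polydisc_submean n ψ D' hD' hdiff z δ hδ hballD'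
    have hpoint : ∀ w ∈ ball z δ, ‖ψ w‖ ≤ 1 + ‖ψ w‖ ^ p := by
      intro w _
      rcases le_or_gt ‖ψ w‖ 1 with h | h
      · have : (0:ℝ) ≤ ‖ψ w‖ ^ p := Real.rpow_nonneg (norm_nonneg _) p
        linarith
      · have h2 : ‖ψ w‖ ^ (1:ℝ) ≤ ‖ψ w‖ ^ p :=
          Real.rpow_le_rpow_of_exponent_le h.le hple.le
        rw [Real.rpow_one] at h2
        linarith
    have hcont_ball : IntegrableOn (fun w => ‖ψ w‖) (ball z δ) := by
      apply (((hdiff.continuousOn.mono hballD').norm).integrableOn_compact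
        (isCompact_closedBall _ _)).mono_set ball_subset_closedBall
    have hfin : volume (ball z δ) < ⊤ :=
      lt_of_le_of_lt (measure_mono ball_subset_closedBall) (isCompact_closedBall z δ).measure_lt_top
    have hint_ball : IntegrableOn (fun w => 1 + ‖ψ w‖ ^ p) (ball z δ) := by
      apply Integrable.add
      · exact integrableOn_const hfin.ne
      · exact hint.mono_set (ball_subset_closedBall.trans hballD')
    have hstep : ∫ w in ball z δ, ‖ψ w‖ ≤ V₀ + 1 := by
      calc ∫ w in ball z δ, ‖ψ w‖ ≤ ∫ w in ball z δ, (1 + ‖ψ w‖ ^ p) :=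
            setIntegral_mono_on hcont_ball hint_ball measurableSet_ball hpoint
        _ = (volume (ball z δ)).toReal + ∫ w in ball z δ, ‖ψ w‖ ^ p := by
            rw [integral_add (integrableOn_const (C := (1:ℝ)) hfin.ne)
              (hint.mono_set (ball_subset_closedBall.trans hballD'))]
            simp [measureReal_def]
        _ ≤ V₀ + 1 := by
            apply add_le_add
            · rw [hV₀]
              exact ENNReal.toReal_mono (isCompact_closedBall z₀ (2*δ)).measure_lt_top.ne
                (measure_mono (ball_subset_closedBall.trans hball_sub))
            · exact le_trans (hIntLe ψ hint _ (ball_subset_closedBall.trans hballD')) hI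
    rw [le_div_iff₀ hπδ]
    calc ‖ψ z‖ * (Real.pi^n * δ^(2*n)) = Real.pi^n * δ^(2*n) * ‖ψ z‖ := by ring
      _ ≤ ∫ w in ball z δ, ‖ψ w‖ := hpd
      _ ≤ V₀ + 1 := hstep

lemma integral_pos_of_ne (n : ℕ) (p : ℝ) (hp : 0 < p) (D' : Set (Fin n → ℂ)) (hD' : IsOpen D')
    (ψ : (Fin n → ℂ) → ℂ) (hdiff : DifferentiableOn ℂ ψ D')
    (hint : IntegrableOn (fun w => ‖ψ w‖ ^ p) D' volume)
    (w : Fin n → ℂ) (hw : w ∈ D') (hψw : ψ w ≠ 0) :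
    0 < ∫ v in D', ‖ψ v‖ ^ p := by
  have hcont : ContinuousAt ψ w := hdiff.continuousOn.continuousAt (hD'.mem_nhds hw)
  have hpos : 0 < ‖ψ w‖ := norm_pos_iff.mpr hψw
  obtain ⟨ε, hε, hballsub, hlower⟩ : ∃ ε > 0, ball w ε ⊆ D' ∧
      ∀ v ∈ ball w ε, ‖ψ w‖/2 ≤ ‖ψ v‖ := by
    rcases Metric.continuousAt_iff.mp hcont (‖ψ w‖/2) (by positivity) with ⟨ε₁, hε₁, h₁⟩
    rcases Metric.isOpen_iff.mp hD' w hw with ⟨ε₂, hε₂, h₂⟩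
    refine ⟨min ε₁ ε₂, lt_min hε₁ hε₂,
      fun v hv => h₂ (lt_of_lt_of_le (mem_ball.mp hv) (min_le_right _ _)), fun v hv => ?_⟩
    have h3 := h₁ (show dist v w < ε₁ from lt_of_lt_of_le (mem_ball.mp hv) (min_le_left _ _))
    rw [dist_eq_norm] at h3
    have h4 : ‖ψ w‖ - ‖ψ v‖ ≤ ‖ψ v - ψ w‖ := by
      rw [norm_sub_rev]
      exact norm_sub_norm_le _ _
    linarith
  have hfin : volume (ball w ε) ≠ ⊤ := measure_ball_lt_top.ne
  have hvolpos : 0 < (volume (ball w ε)).toReal :=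
    ENNReal.toReal_pos (measure_ball_pos volume w hε).ne' hfin
  have h5 : (‖ψ w‖/2) ^ p * (volume (ball w ε)).toReal ≤ ∫ v in ball w ε, ‖ψ v‖ ^ p := by
    apply setIntegral_ge_of_const_le_real measurableSet_ball hfin
    · intro v hv
      exact Real.rpow_le_rpow (by positivity) (hlower v hv) hp.le
    · exact hint.mono_set hballsub
  have h6 : ∫ v in ball w ε, ‖ψ v‖ ^ p ≤ ∫ v in D', ‖ψ v‖ ^ p := by
    apply setIntegral_mono_set hint
    · exact Filter.Eventually.of_forall fun v => Real.rpow_nonneg (norm_nonneg _) p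
    · exact Filter.Eventually.of_forall hballsub |>.mono fun v hv => hv
  have h7 : (0:ℝ) < (‖ψ w‖/2) ^ p * (volume (ball w ε)).toReal := by
    have := Real.rpow_pos_of_pos (show (0:ℝ) < ‖ψ w‖/2 by positivity) p
    positivity
  linarith

/-- if the `p`-Bergman kernel of a bounded domain `D` is exhaustive,
then `D` is `A^p`-complete. -/
theorem apComplete_of_exhaustive_pBergman (n : ℕ) (D : Set (Fin n → ℂ))
    (hD : IsOpen D) (hDc : IsConnected D) (hDb : Bornology.IsBounded D)
    (p : ℝ) (hp : 0 < p)
    (hexh : ∀ c : ℝ, IsCompact {z ∈ D | pBergman n p D z ≤ c}) :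
    ApComplete n p D := by
  rintro ⟨D', hD'open, hD'conn, hsubDD', hne, hrestr, hext⟩
  rcases Nat.eq_zero_or_pos n with hn0 | hn
  · subst hn0
    obtain ⟨x, hx⟩ := hDc.nonempty
    apply hne
    apply Set.Subset.antisymm hsubDD'
    intro y hy
    rwa [Subsingleton.elim y x]
  -- find a boundary point of D inside D'
  have hbd : ¬ (closure D ∩ D' ⊆ D) := by
    intro hcl
    apply hne
    refine Set.Subset.antisymm hsubDD' ?_
    have hDopen2 : IsOpen (D' \ closure D) := hD'open.sdiff isClosed_closure
    have hsubun : D' ⊆ D ∪ (D' \ closure D) := by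
      intro y hy
      by_cases hyc : y ∈ closure D
      · exact Or.inl (hcl ⟨hyc, hy⟩)
      · exact Or.inr ⟨hy, hyc⟩
    have hdisj : Disjoint D (D' \ closure D) := by
      rw [Set.disjoint_left]
      intro a haD ha2
      exact ha2.2 (subset_closure haD)
    obtain ⟨x, hx⟩ := hDc.nonempty
    exact hD'conn.isPreconnected.subset_left_of_subset_union hD hDopen2 hdisj hsubun
      ⟨x, hsubDD' hx, hx⟩
  obtain ⟨z₀, hz₀, hz₀D⟩ := Set.not_subset.mp hbd
  obtain ⟨hz₀cl, hz₀D'⟩ := hz₀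
  obtain ⟨ε, hε, hballD'⟩ := Metric.isOpen_iff.mp hD'open z₀ hz₀D'
  set δ := ε/4 with hδdef
  have hδ : 0 < δ := by positivity
  have hsubcb : closedBall z₀ (2*δ) ⊆ D' := by
    intro w hw
    apply hballD'
    rw [mem_ball]
    have := mem_closedBall.mp hw
    have h2δ : 2*δ = ε/2 := by rw [hδdef]; ring
    linarith
  obtain ⟨C, hC0, hC⟩ := key_bound n p hp hn D' hD'open z₀ δ hδ hsubcb
  set c := C^2 with hcdef
  have hsublevel : D ∩ ball z₀ δ ⊆ {z ∈ D | pBergman n p D z ≤ c} := by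
    rintro z ⟨hzD, hzball⟩
    refine ⟨hzD, ?_⟩
    rw [pBergman]
    apply Real.sSup_le _ (by positivity)
    rintro x ⟨φ, hφ, ⟨w, hwD, hw0⟩, hx⟩
    obtain ⟨ψ, hψ, heq⟩ := hext φ hφ
    obtain ⟨hψD, hnorm⟩ := hrestr ψ hψ
    have hDint : ∫ v in D, ‖ψ v‖ ^ p = ∫ v in D, ‖φ v‖ ^ p :=
      setIntegral_congr_fun hD.measurableSet (fun v hv => by rw [heq v hv])
    have hapD : apNorm n p D ψ = apNorm n p D φ := by rw [apNorm, apNorm, hDint]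
    have hNpos : 0 < ∫ v in D', ‖ψ v‖ ^ p :=
      integral_pos_of_ne n p hp D' hD'open ψ hψ.1 hψ.2 w (hsubDD' hwD)
        (by rw [heq w hwD]; exact hw0)
    have hN : 0 < apNorm n p D' ψ := Real.rpow_pos_of_pos hNpos _
    set N := apNorm n p D' ψ with hNdef
    have hNp : N ^ p = ∫ v in D', ‖ψ v‖ ^ p := by
      rw [hNdef, apNorm, ← Real.rpow_mul (le_of_lt hNpos), one_div_mul_cancel hp.ne',
        Real.rpow_one]
    set ψ' : (Fin n → ℂ) → ℂ := fun v => ψ v / (N:ℂ) with hψ'def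
    have hψ'diff : DifferentiableOn ℂ (fun v => ψ v / (N:ℂ)) D' := by
      simp only [div_eq_mul_inv]
      exact hψ.1.mul_const _
    have hnormN : ‖(N:ℂ)‖ = N := by
      rw [Complex.norm_real, Real.norm_eq_abs, abs_of_pos hN]
    have hscale : ∀ v, ‖ψ' v‖ ^ p = ‖ψ v‖ ^ p / N ^ p := by
      intro v
      have : ‖ψ' v‖ = ‖ψ v‖ / N := by rw [hψ'def]; simp only [norm_div, hnormN]
      rw [this, Real.div_rpow (norm_nonneg _) hN.le]
    have hfuneq : (fun v => ‖ψ' v‖ ^ p) = fun v => ‖ψ v‖ ^ p / N ^ p := funext hscale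
    have hψ'int : IntegrableOn (fun v => ‖ψ' v‖ ^ p) D' volume := by
      rw [hfuneq]
      exact hψ.2.div_const _
    have hψ'I : ∫ v in D', ‖ψ' v‖ ^ p = 1 := by
      rw [hfuneq, integral_div, ← hNp, div_self (Real.rpow_pos_of_pos hN p).ne']
    have hbound := hC ψ' hψ'diff hψ'int (le_of_eq hψ'I) z (ball_subset_closedBall hzball)
    have hψ'z : ‖ψ' z‖ = ‖ψ z‖ / N := by rw [hψ'def]; simp only [norm_div, hnormN]
    have hxval : x = ‖ψ' z‖ ^ 2 := by
      rw [hx, hψ'z, div_pow]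
      congr 1
      · rw [heq z hzD]
      · rw [← hapD, hnorm]
    rw [hxval, hcdef]
    exact pow_le_pow_left₀ (norm_nonneg _) hbound 2
  have hKcl : IsClosed {z ∈ D | pBergman n p D z ≤ c} := (hexh c).isClosed
  have hz₀mem : z₀ ∈ closure (D ∩ ball z₀ δ) := by
    rw [_root_.mem_closure_iff]
    intro O hO hz₀O
    rw [_root_.mem_closure_iff] at hz₀cl
    rcases hz₀cl (O ∩ ball z₀ δ) (hO.inter isOpen_ball) ⟨hz₀O, mem_ball_self hδ⟩ with
      ⟨y, ⟨hyO, hyb⟩, hyD⟩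
    exact ⟨y, hyO, hyD, hyb⟩
  have hz₀K : z₀ ∈ {z ∈ D | pBergman n p D z ≤ c} :=
    (hKcl.closure_subset_iff.mpr hsublevel) hz₀mem
  exact hz₀D hz₀K.1
end

section
/- Let D be a bounded domain in ℂⁿ such that the interior of its closure equals D itself. Then D is A^p-complete for every p > 0. -/
open MeasureTheory

/-- On a ball, if a holomorphic function equals `c` near one point, it equals `c` everywhere,
by restricting to complex lines and using the 1-variable identity theorem. -/
lemma eqOn_const_ball_aux {E : Type*} [NormedAddCommGroup E] [NormedSpace ℂ E]
    {ψ : E → ℂ} {z : E} {r : ℝ} {w₀ : E} {c : ℂ}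
    (hψ : DifferentiableOn ℂ ψ (Metric.ball z r)) (hw₀ : w₀ ∈ Metric.ball z r)
    (hev : ∀ᶠ w in nhds w₀, ψ w = c) :
    ∀ y ∈ Metric.ball z r, ψ y = c := by
  intro y hy
  set v := y - w₀ with hv
  set L : ℂ → E := fun t => w₀ + t • v with hLdef
  have hLd : Differentiable ℂ L := (differentiable_id.smul_const v).const_add w₀
  have hL0 : L 0 = w₀ := by simp [hLdef]
  have hL1 : L 1 = y := by simp [hLdef, hv]
  set S : Set ℂ := L ⁻¹' Metric.ball z r with hSdef
  have hSo : IsOpen S := Metric.isOpen_ball.preimage hLd.continuous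
  have hScvx : Convex ℝ S := by
    intro t₁ h₁ t₂ h₂ a b ha hb hab
    have key : L (a • t₁ + b • t₂) = a • L t₁ + b • L t₂ := by
      have hb1 : b = 1 - a := by linarith
      subst hb1
      simp only [hLdef]
      match_scalars <;> simp [Complex.real_smul, sub_smul, one_smul] <;> ring
    show L (a • t₁ + b • t₂) ∈ Metric.ball z r
    rw [key]
    exact (convex_ball z r) h₁ h₂ ha hb hab
  have hgd : DifferentiableOn ℂ (ψ ∘ L) S :=
    hψ.comp hLd.differentiableOn (fun t ht => ht)
  have hga : AnalyticOnNhd ℂ (ψ ∘ L) S := hgd.analyticOnNhd hSo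
  have hca : AnalyticOnNhd ℂ (fun _ => c) S := fun t _ => analyticAt_const
  have h0 : (0 : ℂ) ∈ S := by simp [hSdef, Set.mem_preimage, hL0, hw₀]
  have h1 : (1 : ℂ) ∈ S := by simp [hSdef, Set.mem_preimage, hL1, hy]
  have hev0 : (ψ ∘ L) =ᶠ[nhds 0] fun _ => c := by
    have ht : Filter.Tendsto L (nhds 0) (nhds w₀) := by
      have := hLd.continuous.continuousAt (x := (0 : ℂ))
      rwa [ContinuousAt, hL0] at this
    exact ht.eventually hev
  have := hga.eqOn_of_preconnected_of_eventuallyEq hca hScvx.isPreconnected h0 hev0 h1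
  simpa [hL1] using this

/-- Identity theorem: a holomorphic function on a preconnected open set that equals a constant
on a nonempty open subset equals that constant everywhere. -/
lemma eqOn_const_of_open_subset {E : Type*} [NormedAddCommGroup E] [NormedSpace ℂ E]
    {ψ : E → ℂ} {U : Set E} (hU : IsOpen U) (hUc : IsPreconnected U)
    (hψ : DifferentiableOn ℂ ψ U) {V : Set E} (hVo : IsOpen V) (hVne : V.Nonempty)
    (hVU : V ⊆ U) {c : ℂ} (hc : ∀ z ∈ V, ψ z = c) : ∀ z ∈ U, ψ z = c := by
  set A : Set E := {z | ∀ᶠ w in nhds z, ψ w = c} with hAdef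
  have hAo : IsOpen A := isOpen_setOf_eventually_nhds
  have key : ∀ z ∈ U, z ∈ closure A → z ∈ A := by
    intro z hzU hzA
    obtain ⟨r, hr, hball⟩ := Metric.isOpen_iff.1 hU z hzU
    obtain ⟨w₀, hw₀A, hw₀d⟩ := Metric.mem_closure_iff.1 hzA r hr
    have hw₀b : w₀ ∈ Metric.ball z r := by
      rw [Metric.mem_ball, dist_comm]; exact hw₀d
    have hb := eqOn_const_ball_aux (hψ.mono hball) hw₀b hw₀A
    exact Filter.eventually_of_mem (Metric.isOpen_ball.mem_nhds (Metric.mem_ball_self hr)) hb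
  intro z hzU
  by_contra hzc
  have hzA : z ∉ A := fun h => hzc h.self_of_nhds
  have hzcl : z ∉ closure A := fun h => hzA (key z hzU h)
  obtain ⟨v₀, hv₀⟩ := hVne
  have hv₀A : v₀ ∈ A :=
    Filter.eventually_of_mem (hVo.mem_nhds hv₀) hc
  have := hUc A (closure A)ᶜ hAo isClosed_closure.isOpen_compl
    (fun w hw => by
      by_cases h : w ∈ closure A
      · exact Or.inl (key w hw h)
      · exact Or.inr h)
    ⟨v₀, hVU hv₀, hv₀A⟩ ⟨z, hzU, hzcl⟩
  obtain ⟨w, _, hwA, hwcl⟩ := this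
  exact hwcl (subset_closure hwA)

/-- a bounded domain `D ⊆ ℂⁿ` with `int(cl(D)) = D` is `A^p`-complete
for every `p > 0`. -/
theorem apComplete_of_interior_closure_eq (n : ℕ) (D : Set (Fin n → ℂ))
    (hD : IsOpen D) (hDc : IsConnected D) (hDb : Bornology.IsBounded D)
    (hreg : interior (closure D) = D) :
    ∀ p : ℝ, 0 < p → ApComplete n p D := by
  intro p hp
  rintro ⟨D', hD'o, hD'c, hsub, hne, hiso₁, hiso₂⟩
  have hμD : volume D < ⊤ := hDb.measure_lt_top
  have h1mem : MemAp n p D (fun _ => 1) := by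
    refine ⟨differentiableOn_const _, ?_⟩
    simp only [norm_one, Real.one_rpow]
    exact integrableOn_const hμD.ne
  obtain ⟨ψ, hψmem, hψeq⟩ := hiso₂ _ h1mem
  have hψ1 : ∀ z ∈ D', ψ z = 1 :=
    eqOn_const_of_open_subset hD'o hD'c.isPreconnected hψmem.1 hD hDc.nonempty hsub
      (fun z hz => hψeq z hz)
  have hint : ∀ s : Set (Fin n → ℂ), (∀ z ∈ s, ψ z = 1) → MeasurableSet s →
      ∫ z in s, ‖ψ z‖ ^ p = (volume s).toReal := by
    intro s hs hms
    rw [setIntegral_congr_fun hms (g := fun _ => (1 : ℝ))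
      (fun z hz => by simp [hs z hz, Real.one_rpow]), setIntegral_const, smul_eq_mul, mul_one, measureReal_def]
  have hD'int := hint D' hψ1 hD'o.measurableSet
  have hDint := hint D (fun z hz => hψ1 z (hsub hz)) hD.measurableSet
  have hμD' : volume D' < ⊤ := by
    have h1 : IntegrableOn (fun _ => (1 : ℝ)) D' volume :=
      hψmem.2.congr_fun (fun z hz => by simp [hψ1 z hz, Real.one_rpow]) hD'o.measurableSet
    rcases (integrableOn_const_iff (C := (1 : ℝ)) (by simp)).1 h1 with h | h
    · exact absurd h (by simp)
    · exact h
  have hnorm := (hiso₁ ψ hψmem).2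
  rw [apNorm, apNorm, hDint, hD'int] at hnorm
  have htr : (volume D).toReal = (volume D').toReal :=
    Real.rpow_left_injOn (one_div_ne_zero hp.ne') ENNReal.toReal_nonneg
      ENNReal.toReal_nonneg hnorm
  have hvol : volume D = volume D' :=
    (ENNReal.toReal_eq_toReal_iff' hμD.ne hμD'.ne).1 htr
  have hdiff : volume (D' \ D) = 0 := by
    rw [measure_diff hsub hD.measurableSet.nullMeasurableSet hμD.ne, ← hvol, tsub_self]
  have hclos : D' ⊆ closure D := by
    intro w hw
    by_contra hwc
    have hUo : IsOpen (D' ∩ (closure D)ᶜ) := hD'o.inter isClosed_closure.isOpen_compl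
    have hpos := hUo.measure_pos volume ⟨w, hw, hwc⟩
    have hz : volume (D' ∩ (closure D)ᶜ) = 0 :=
      measure_mono_null (fun z hz =>
        Set.mem_diff_of_mem hz.1 (fun hzD => hz.2 (subset_closure hzD))) hdiff
    exact hpos.ne' hz
  have hD'D : D' ⊆ D := by
    rw [← hreg]; exact interior_maximal hclos hD'o
  exact hne (subset_antisymm hsub hD'D)
end

section
/- Let D ⊂ ℂⁿ be a bounded Runge domain (holomorphically convex and every holomorphic function on D is a locally uniform limit of polynomials). Then D does not have the punctured disc property: there is no proper holomorphic map h : 𝔻* → D, where 𝔻* = {z : 0 < |z| ≤ 1}. -/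
open MeasureTheory

/-- The punctured closed unit disc `𝔻* = {z ∈ ℂ : 0 < |z| ≤ 1}`. -/
def puncturedDisc : Set ℂ := Metric.closedBall 0 1 \ {0}

/-- `D` has the punctured disc property: there is a proper holomorphic map `𝔻* → D`. -/
def HasPDP (n : ℕ) (D : Set (Fin n → ℂ)) : Prop :=
  ∃ h : ℂ → (Fin n → ℂ),
    DifferentiableOn ℂ h (Metric.ball 0 1 \ {0}) ∧
    ContinuousOn h puncturedDisc ∧
    Set.MapsTo h puncturedDisc D ∧
    ∀ K : Set (Fin n → ℂ), K ⊆ D → IsCompact K →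
      IsCompact (puncturedDisc ∩ h ⁻¹' K)

/-- `D` is a Runge domain: holomorphically convex, and every holomorphic function on `D`
is a uniform limit of polynomials on compact subsets of `D`. -/
def IsRunge (n : ℕ) (D : Set (Fin n → ℂ)) : Prop :=
  (∀ K : Set (Fin n → ℂ), K ⊆ D → IsCompact K →
    IsCompact {z ∈ D | ∀ f : (Fin n → ℂ) → ℂ, DifferentiableOn ℂ f D →
      ‖f z‖ ≤ sSup ((fun w => ‖f w‖) '' K)}) ∧
  (∀ f : (Fin n → ℂ) → ℂ, DifferentiableOn ℂ f D →
    ∀ K : Set (Fin n → ℂ), K ⊆ D → IsCompact K → ∀ ε : ℝ, 0 < ε →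
      ∃ P : MvPolynomial (Fin n) ℂ, ∀ z ∈ K, ‖f z - MvPolynomial.eval z P‖ ≤ ε)

/-- Evaluation of a multivariate polynomial is differentiable. -/
lemma mvPolynomial_eval_differentiable {n : ℕ} (P : MvPolynomial (Fin n) ℂ) :
    Differentiable ℂ (fun x : Fin n → ℂ => MvPolynomial.eval x P) := by
  have := (AnalyticOnNhd.eval_mvPolynomial (𝕜 := ℂ) P).differentiableOn
  exact fun x => (this x (Set.mem_univ x)).differentiableAt (by simp)

/-- a bounded Runge domain does not have the punctured disc property. -/
theorem runge_not_hasPDP (n : ℕ) (D : Set (Fin n → ℂ))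
    (hD : IsOpen D) (hDc : IsConnected D) (hDb : Bornology.IsBounded D)
    (hrunge : IsRunge n D) :
    ¬ HasPDP n D := by
  rintro ⟨h, hdiff, hcont, hmaps, hproper⟩
  set S : Set ℂ := Metric.sphere 0 1 with hSdef
  have hSsub : S ⊆ puncturedDisc := by
    intro z hz
    simp only [hSdef, Metric.mem_sphere, dist_zero_right] at hz
    refine ⟨by simp only [Metric.mem_closedBall, dist_zero_right]; exact hz.le, ?_⟩
    intro h0
    simp only [Set.mem_singleton_iff] at h0
    rw [h0] at hz; simp at hz
  have hK0 : IsCompact (h '' S) :=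
    (isCompact_sphere 0 1).image_of_continuousOn (hcont.mono hSsub)
  have hK0sub : h '' S ⊆ D := (hmaps.mono_left hSsub).image_subset
  set Khat := {z ∈ D | ∀ f : (Fin n → ℂ) → ℂ, DifferentiableOn ℂ f D →
      ‖f z‖ ≤ sSup ((fun w => ‖f w‖) '' (h '' S))} with hKhatdef
  have hKhat : IsCompact Khat := hrunge.1 (h '' S) hK0sub hK0
  have hKhatsub : Khat ⊆ D := fun z hz => hz.1
  -- main claim: h maps the punctured disc into Khat
  have main : ∀ w ∈ puncturedDisc, h w ∈ Khat := by
    intro w hw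
    have hw0 : w ≠ 0 := fun h0 => hw.2 (by simp [h0])
    have hwcb : w ∈ Metric.closedBall (0:ℂ) 1 := hw.1
    refine ⟨hmaps hw, fun f hf => ?_⟩
    set M := sSup ((fun y => ‖f y‖) '' (h '' S)) with hMdef
    have hMbdd : BddAbove ((fun y => ‖f y‖) '' (h '' S)) :=
      (hK0.image_of_continuousOn
        ((continuous_norm.comp_continuousOn (hf.continuousOn)).mono hK0sub)).bddAbove
    have hMle : ∀ y ∈ h '' S, ‖f y‖ ≤ M := fun y hy => le_csSup hMbdd ⟨y, hy, rfl⟩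
    refine le_of_forall_pos_le_add (fun ε hε => ?_)
    set L := insert (h w) (h '' S) with hLdef
    have hLc : IsCompact L := hK0.insert (h w)
    have hLsub : L ⊆ D := Set.insert_subset (hmaps hw) hK0sub
    obtain ⟨P, hP⟩ := hrunge.2 f hf L hLsub hLc (ε/4) (by positivity)
    -- two elementary norm estimates
    have hest1 : ∀ z ∈ L, ‖MvPolynomial.eval z P‖ ≤ ‖f z‖ + ε/4 := by
      intro z hz
      have h1 : MvPolynomial.eval z P = f z - (f z - MvPolynomial.eval z P) := by ring
      calc ‖MvPolynomial.eval z P‖ = ‖f z - (f z - MvPolynomial.eval z P)‖ := by rw [← h1]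
        _ ≤ ‖f z‖ + ‖f z - MvPolynomial.eval z P‖ := norm_sub_le _ _
        _ ≤ ‖f z‖ + ε/4 := by linarith [hP z hz]
    have hest2 : ∀ z ∈ L, ‖f z‖ ≤ ‖MvPolynomial.eval z P‖ + ε/4 := by
      intro z hz
      have h1 : f z = MvPolynomial.eval z P + (f z - MvPolynomial.eval z P) := by ring
      calc ‖f z‖ = ‖MvPolynomial.eval z P + (f z - MvPolynomial.eval z P)‖ := by rw [← h1]
        _ ≤ ‖MvPolynomial.eval z P‖ + ‖f z - MvPolynomial.eval z P‖ := norm_add_le _ _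
        _ ≤ ‖MvPolynomial.eval z P‖ + ε/4 := by linarith [hP z hz]
    -- the composed function
    set g : ℂ → ℂ := fun ζ => MvPolynomial.eval (h ζ) P with hgdef
    have hPdiff := mvPolynomial_eval_differentiable P
    have hballsub : Metric.ball (0:ℂ) 1 \ {0} ⊆ puncturedDisc :=
      Set.diff_subset_diff_left Metric.ball_subset_closedBall
    have hgdiff : DifferentiableOn ℂ g (Metric.ball 0 1 \ {0}) :=
      hPdiff.comp_differentiableOn hdiff
    -- boundedness of g
    have hDclos : IsCompact (closure D) := hDb.isCompact_closure
    obtain ⟨C0, hC0⟩ := hDclos.exists_bound_of_continuousOn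
      (hPdiff.continuous.continuousOn (s := closure D))
    have hbdd : BddAbove ((norm ∘ g) '' (Metric.ball 0 1 \ {0})) := by
      refine ⟨C0, ?_⟩
      rintro - ⟨ζ, hζ, rfl⟩
      exact hC0 _ (subset_closure (hmaps (hballsub hζ)))
    -- the removable-singularity extension G
    set G : ℂ → ℂ := Function.update g 0 (Filter.limUnder (nhdsWithin 0 {(0:ℂ)}ᶜ) g) with hGdef
    have hGdiff : DifferentiableOn ℂ G (Metric.ball 0 1) :=
      Complex.differentiableOn_update_limUnder_of_bddAbove
        (Metric.ball_mem_nhds 0 one_pos) hgdiff hbdd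
    have hGg : ∀ ζ : ℂ, ζ ≠ 0 → G ζ = g ζ := fun ζ hζ => Function.update_of_ne hζ _ _
    have hgcont : ContinuousOn g puncturedDisc :=
      hPdiff.continuous.comp_continuousOn hcont
    have hGcont : ContinuousOn G (Metric.closedBall 0 1) := by
      intro ζ hζ
      by_cases hζ0 : ζ = 0
      · subst hζ0
        exact ((hGdiff.differentiableAt
          (Metric.ball_mem_nhds 0 one_pos)).continuousAt).continuousWithinAt
      · have hmem : puncturedDisc ∈ nhdsWithin ζ (Metric.closedBall (0:ℂ) 1) := by
          rw [puncturedDisc, Set.diff_eq]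
          exact Filter.inter_mem self_mem_nhdsWithin
            (mem_nhdsWithin_of_mem_nhds (isOpen_compl_singleton.mem_nhds hζ0))
        have hgc : ContinuousWithinAt g (Metric.closedBall 0 1) ζ :=
          (hgcont ζ ⟨hζ, hζ0⟩).mono_of_mem_nhdsWithin hmem
        refine hgc.congr_of_eventuallyEq ?_ (hGg ζ hζ0)
        filter_upwards [hmem] with x hx
        exact hGg x hx.2
    have hdcc : DiffContOnCl ℂ G (Metric.ball 0 1) :=
      ⟨hGdiff, by rwa [closure_ball (0:ℂ) one_ne_zero]⟩
    -- maximum modulus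
    have hfrontier : ∀ z ∈ frontier (Metric.ball (0:ℂ) 1), ‖G z‖ ≤ M + ε/4 := by
      intro z hz
      rw [frontier_ball (0:ℂ) one_ne_zero] at hz
      have hz0 : z ≠ 0 := by
        intro h0; rw [h0] at hz
        simp only [Metric.mem_sphere, dist_self] at hz
        norm_num at hz
      rw [hGg z hz0]
      have hhz : h z ∈ h '' S := ⟨z, hz, rfl⟩
      calc ‖g z‖ ≤ ‖f (h z)‖ + ε/4 := hest1 (h z) (Set.mem_insert_of_mem _ hhz)
        _ ≤ M + ε/4 := by linarith [hMle (h z) hhz]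
    have hwc : w ∈ closure (Metric.ball (0:ℂ) 1) := by
      rwa [closure_ball (0:ℂ) one_ne_zero]
    have hmax : ‖G w‖ ≤ M + ε/4 :=
      Complex.norm_le_of_forall_mem_frontier_norm_le Metric.isBounded_ball hdcc hfrontier hwc
    rw [hGg w hw0] at hmax
    have := hest2 (h w) (Set.mem_insert _ _)
    have hgw : g w = MvPolynomial.eval (h w) P := rfl
    rw [← hgw] at this
    linarith
  -- properness gives compactness of the punctured disc
  have heq : puncturedDisc ∩ h ⁻¹' Khat = puncturedDisc := by
    apply Set.inter_eq_left.mpr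
    intro w hw
    exact main w hw
  have hcpt : IsCompact puncturedDisc := by
    have := hproper Khat hKhatsub hKhat
    rwa [heq] at this
  -- but the punctured disc is not compact
  have h0cl : (0:ℂ) ∈ closure puncturedDisc := by
    apply mem_closure_iff_seq_limit.mpr
    refine ⟨fun k => ((k:ℂ)+1)⁻¹, fun k => ⟨?_, ?_⟩, ?_⟩
    · have habs : ‖(k:ℂ)+1‖ = (k:ℝ)+1 := by
        rw [show ((k:ℂ)+1) = (((k+1:ℕ)):ℂ) by push_cast; ring]
        rw [Complex.norm_natCast]; push_cast; ring
      simp only [Metric.mem_closedBall, dist_zero_right, norm_inv, habs]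
      rw [inv_le_one_iff₀]
      right
      linarith [Nat.cast_nonneg (α := ℝ) k]
    · simp only [Set.mem_singleton_iff, inv_eq_zero]
      intro hc
      have : ((k:ℂ)+1) = 0 := hc
      have : ((k:ℝ)+1) = 0 := by exact_mod_cast this
      linarith [Nat.cast_nonneg (α := ℝ) k]
    · rw [tendsto_zero_iff_norm_tendsto_zero]
      have : ∀ k : ℕ, ‖((k:ℂ)+1)⁻¹‖ = 1/((k:ℝ)+1) := by
        intro k
        have habs : ‖(k:ℂ)+1‖ = (k:ℝ)+1 := by
          rw [show ((k:ℂ)+1) = (((k+1:ℕ)):ℂ) by push_cast; ring]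
          rw [Complex.norm_natCast]; push_cast; ring
        rw [norm_inv, one_div, habs]
      simp only [this]
      exact tendsto_one_div_add_atTop_nhds_zero_nat
  have : (0:ℂ) ∈ puncturedDisc := by
    rwa [hcpt.isClosed.closure_eq] at h0cl
  exact this.2 rfl
end

section
/- Let D₁, D₂ be bounded domains in ℂⁿ, T : A^p(D₁) → A^p(D₂) a linear isometry, and suppose F is defined on a subset D₁' ⊂ D₁ by F(z) = w whenever there exists λ ∈ ℂ* with (Tφ)(w) = λφ(z) for all φ ∈ A^p(D₁). If zⱼ ∈ D₁' with zⱼ → z ∈ D₁ and F(zⱼ) → w ∈ D₂, then z ∈ D₁' and F(z) = w. -/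
open MeasureTheory

/-- `T` is a linear isometry `A^p(D₁) → A^p(D₂)`: it maps `A^p(D₁)` into `A^p(D₂)`,
is linear (on `D₂`, where values of elements of `A^p(D₂)` matter), norm preserving,
and surjective onto `A^p(D₂)`. -/
def IsApIsometry (n m : ℕ) (p : ℝ) (D₁ : Set (Fin n → ℂ)) (D₂ : Set (Fin m → ℂ))
    (T : ((Fin n → ℂ) → ℂ) → ((Fin m → ℂ) → ℂ)) : Prop :=
  (∀ φ, MemAp n p D₁ φ → MemAp m p D₂ (T φ)) ∧
  (∀ φ ψ, MemAp n p D₁ φ → MemAp n p D₁ ψ →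
      ∀ w ∈ D₂, T (φ + ψ) w = T φ w + T ψ w) ∧
  (∀ (c : ℂ) φ, MemAp n p D₁ φ → ∀ w ∈ D₂, T (fun z => c * φ z) w = c * T φ w) ∧
  (∀ φ, MemAp n p D₁ φ → apNorm m p D₂ (T φ) = apNorm n p D₁ φ) ∧
  (∀ ψ, MemAp m p D₂ ψ → ∃ φ, MemAp n p D₁ φ ∧ ∀ w ∈ D₂, T φ w = ψ w)

/-- the correspondence `F` induced by a linear isometry
`T : A^p(D₁) → A^p(D₂)` (defined by `F(z) = w` iff evaluation at `w` composed with `T`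
is a nonzero multiple of evaluation at `z`) is closed: limits of corresponding pairs
inside `D₁ × D₂` still correspond. -/
theorem correspondence_closed (n : ℕ)
    (D₁ D₂ : Set (Fin n → ℂ))
    (hD₁ : IsOpen D₁) (hD₁c : IsConnected D₁) (hD₁b : Bornology.IsBounded D₁)
    (hD₂ : IsOpen D₂) (hD₂c : IsConnected D₂) (hD₂b : Bornology.IsBounded D₂)
    (p : ℝ) (hp : 0 < p)
    (T : ((Fin n → ℂ) → ℂ) → ((Fin n → ℂ) → ℂ))
    (hT : IsApIsometry n n p D₁ D₂ T)
    (z : ℕ → Fin n → ℂ) (w : ℕ → Fin n → ℂ)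
    (hzD : ∀ j, z j ∈ D₁) (hwD : ∀ j, w j ∈ D₂)
    (hcorr : ∀ j, ∃ lam : ℂ, lam ≠ 0 ∧
      ∀ φ, MemAp n p D₁ φ → T φ (w j) = lam * φ (z j))
    (z₀ : Fin n → ℂ) (hz₀ : z₀ ∈ D₁) (w₀ : Fin n → ℂ) (hw₀ : w₀ ∈ D₂)
    (hzlim : Filter.Tendsto z Filter.atTop (nhds z₀))
    (hwlim : Filter.Tendsto w Filter.atTop (nhds w₀)) :
    ∃ lam : ℂ, lam ≠ 0 ∧ ∀ φ, MemAp n p D₁ φ → T φ w₀ = lam * φ z₀ := by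
  obtain ⟨hmap, hadd, hsmul, hnorm, hsurj⟩ := hT
  have hvol : ∀ (D : Set (Fin n → ℂ)), Bornology.IsBounded D → volume D < ⊤ := by
    intro D hD
    exact lt_of_le_of_lt (measure_mono subset_closure)
      hD.isCompact_closure.measure_lt_top
  have hone : ∀ (D : Set (Fin n → ℂ)), Bornology.IsBounded D →
      MemAp n p D (fun _ => 1) := by
    intro D hD
    refine ⟨differentiableOn_const 1, ?_⟩
    have : (fun z : Fin n → ℂ => ‖(1 : ℂ)‖ ^ p) = fun _ => (1 : ℝ) := by
      funext z; simp [Real.one_rpow]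
    rw [this]
    exact (integrableOn_const_iff (C := (1 : ℝ))).mpr (Or.inr (hvol D hD))
  set g := T (fun _ => 1) with hgdef
  have hg : MemAp n p D₂ g := hmap _ (hone D₁ hD₁b)
  have hgcont : ContinuousAt g w₀ :=
    hg.1.continuousOn.continuousAt (hD₂.mem_nhds hw₀)
  choose lam hlam0 hlam using hcorr
  have hlamg : ∀ j, lam j = g (w j) := by
    intro j
    have := hlam j _ (hone D₁ hD₁b)
    simpa using this.symm
  have key : ∀ φ, MemAp n p D₁ φ → T φ w₀ = g w₀ * φ z₀ := by
    intro φ hφ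
    have h1 : Filter.Tendsto (fun j => T φ (w j)) Filter.atTop (nhds (T φ w₀)) :=
      (((hmap φ hφ).1.continuousOn.continuousAt (hD₂.mem_nhds hw₀)).tendsto).comp hwlim
    have h2 : Filter.Tendsto (fun j => g (w j) * φ (z j)) Filter.atTop
        (nhds (g w₀ * φ z₀)) :=
      ((hgcont.tendsto).comp hwlim).mul
        (((hφ.1.continuousOn.continuousAt (hD₁.mem_nhds hz₀)).tendsto).comp hzlim)
    have heq : (fun j => T φ (w j)) = fun j => g (w j) * φ (z j) := by
      funext j; rw [hlam j _ hφ, hlamg j]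
    rw [heq] at h1
    exact tendsto_nhds_unique h1 h2
  refine ⟨g w₀, ?_, key⟩
  intro hzero
  obtain ⟨φ, hφ, hφeq⟩ := hsurj _ (hone D₂ hD₂b)
  have h1 : T φ w₀ = 1 := hφeq w₀ hw₀
  have h2 : T φ w₀ = 0 := by rw [key φ hφ, hzero, zero_mul]
  rw [h1] at h2
  exact one_ne_zero h2
end

section
/- Let D₁, D₂ be bounded domains in ℂⁿ that are glued along a biholomorphism F : D₁∖A₁ → D₂∖A₂, where Aᵢ ⊂ Dᵢ are closed sets, and suppose that the extension F₁ : D₁ → ℂⁿ of F satisfies F₁(A₁) ⊂ ∂D₂ and the extension F₂ : D₂ → ℂⁿ of F⁻¹ satisfies F₂(A₂) ⊂ ∂D₁. Then the glued topological space D₁ ⊔_F D₂ (identify z ∈ D₁∖A₁ with F(z) ∈ D₂∖A₂) is Hausdorff. -/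
/-- The relation gluing `z ∈ D₁ ∖ A₁` with `F z ∈ D₂ ∖ A₂`. -/
def glueRel (n : ℕ) (D₁ D₂ A₁ : Set (Fin n → ℂ))
    (F : (Fin n → ℂ) → (Fin n → ℂ)) :
    (↥D₁ ⊕ ↥D₂) → (↥D₁ ⊕ ↥D₂) → Prop :=
  fun x y =>
    match x, y with
    | Sum.inl z, Sum.inr w => (z : Fin n → ℂ) ∈ D₁ \ A₁ ∧ (w : Fin n → ℂ) = F z
    | _, _ => False

/-- The setoid on `D₁ ⊔ D₂` generated by the gluing relation. -/
def glueSetoid (n : ℕ) (D₁ D₂ A₁ : Set (Fin n → ℂ))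
    (F : (Fin n → ℂ) → (Fin n → ℂ)) : Setoid (↥D₁ ⊕ ↥D₂) :=
  ⟨Relation.EqvGen (glueRel n D₁ D₂ A₁ F),
    Relation.EqvGen.is_equivalence _⟩

/-- gluing two bounded domains `D₁, D₂ ⊆ ℂⁿ` along a biholomorphism
`F : D₁ ∖ A₁ → D₂ ∖ A₂` whose extension `F₁ : D₁ → ℂⁿ` maps `A₁` into `∂D₂` and whose
inverse's extension `F₂ : D₂ → ℂⁿ` maps `A₂` into `∂D₁` produces a Hausdorff space. -/
theorem glued_space_hausdorff (n : ℕ)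
    (D₁ D₂ : Set (Fin n → ℂ))
    (hD₁ : IsOpen D₁) (hD₁c : IsConnected D₁) (hD₁b : Bornology.IsBounded D₁)
    (hD₂ : IsOpen D₂) (hD₂c : IsConnected D₂) (hD₂b : Bornology.IsBounded D₂)
    (A₁ A₂ : Set (Fin n → ℂ))
    (hA₁ : A₁ ⊆ D₁) (hA₂ : A₂ ⊆ D₂)
    (hA₁cl : closure A₁ ∩ D₁ ⊆ A₁) (hA₂cl : closure A₂ ∩ D₂ ⊆ A₂)
    (F₁ F₂ : (Fin n → ℂ) → (Fin n → ℂ))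
    (hF₁c : ContinuousOn F₁ D₁) (hF₂c : ContinuousOn F₂ D₂)
    (hbij : Set.BijOn F₁ (D₁ \ A₁) (D₂ \ A₂))
    (hinv₁ : ∀ z ∈ D₁ \ A₁, F₂ (F₁ z) = z)
    (hinv₂ : ∀ w ∈ D₂ \ A₂, F₁ (F₂ w) = w)
    (hbd₁ : F₁ '' A₁ ⊆ frontier D₂) (hbd₂ : F₂ '' A₂ ⊆ frontier D₁) :
    T2Space (Quotient (glueSetoid n D₁ D₂ A₁ F₁)) := by
  -- The map `g` sending `inl z ↦ (z, F₁ z)` and `inr w ↦ (F₂ w, w)` descends to a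
  -- continuous injection of the glued space into `ℂⁿ × ℂⁿ`, which is Hausdorff.
  set g : (↥D₁ ⊕ ↥D₂) → ((Fin n → ℂ) × (Fin n → ℂ)) :=
    Sum.elim (fun z => ((z : Fin n → ℂ), F₁ z)) (fun w => (F₂ w, (w : Fin n → ℂ))) with hg
  have hgc : Continuous g := by
    apply Continuous.sumElim
    · exact continuous_subtype_val.prodMk hF₁c.restrict
    · exact hF₂c.restrict.prodMk continuous_subtype_val
  have hresp : ∀ a b : (↥D₁ ⊕ ↥D₂), (glueSetoid n D₁ D₂ A₁ F₁).r a b → g a = g b := by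
    intro a b h
    induction h with
    | rel a b h =>
      match a, b with
      | Sum.inl z, Sum.inr w =>
        obtain ⟨hz, hw⟩ := h
        simp only [hg, Sum.elim_inl, Sum.elim_inr, hw, hinv₁ z hz]
    | refl => rfl
    | symm _ _ _ ih => exact ih.symm
    | trans _ _ _ _ _ ih1 ih2 => exact ih1.trans ih2
  have key : ∀ a b : (↥D₁ ⊕ ↥D₂), g a = g b →
      Relation.EqvGen (glueRel n D₁ D₂ A₁ F₁) a b := by
    have base : ∀ (z : ↥D₁) (w : ↥D₂), g (Sum.inl z) = g (Sum.inr w) →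
        Relation.EqvGen (glueRel n D₁ D₂ A₁ F₁) (Sum.inl z) (Sum.inr w) := by
      intro z w h
      simp only [hg, Sum.elim_inl, Sum.elim_inr, Prod.mk.injEq] at h
      have hzA : (z : Fin n → ℂ) ∉ A₁ := by
        intro hA
        have : F₁ z ∈ frontier D₂ := hbd₁ ⟨z, hA, rfl⟩
        rw [h.2] at this
        exact this.2 (by rw [hD₂.interior_eq]; exact w.2)
      exact Relation.EqvGen.rel _ _ ⟨⟨z.2, hzA⟩, h.2.symm⟩
    intro a b h
    match a, b with
    | Sum.inl z, Sum.inl z' =>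
      have : z = z' := Subtype.ext (congrArg Prod.fst h)
      exact this ▸ Relation.EqvGen.refl _
    | Sum.inr w, Sum.inr w' =>
      have : w = w' := Subtype.ext (congrArg Prod.snd h)
      exact this ▸ Relation.EqvGen.refl _
    | Sum.inl z, Sum.inr w => exact base z w h
    | Sum.inr w, Sum.inl z => exact Relation.EqvGen.symm _ _ (base z w h.symm)
  exact T2Space.of_injective_continuous
    (f := Quotient.lift g hresp)
    (fun a b => Quotient.inductionOn₂ a b fun x y h => Quotient.sound (key x y h))
    (hgc.quotient_lift hresp)
end
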